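/- Let P be a finite poset with a unique minimal element which admits a grading assignment and in which every closed interval is shellable. Then any two sign assignments on P are equivalent: if s and s′ are sign assignments on P, then s′ can be obtained from s by a finite sequence of moves, each of which chooses an element p of P and reverses the sign of every covering relation having p as one of its two members. -/

import Mathlib

variable {α : Type*}

/-- The closed interval of the subposet `S` (for the order relation `le`)
between `a` and `b`. -/
def orderInterval (le : α → α → Prop) (S : Set α) (a b : α) : Set α :=
  {z | z ∈ S ∧ le a z ∧ le z b}
/-- A finset is a chain of the subposet `S` for the order relation `le`. -/
def IsChainFinsetIn (le : α → α → Prop) (S : Set α) (C : Finset α) : Prop :=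
  (↑C : Set α) ⊆ S ∧ ∀ u ∈ C, ∀ v ∈ C, u ≠ v → (le u v ∨ le v u)

/-- A maximal chain of the subposet `S`: a chain of `S` which is not properly
contained in any other chain of `S`. -/
def IsMaxChainFinsetIn (le : α → α → Prop) (S : Set α) (C : Finset α) : Prop :=
  IsChainFinsetIn le S C ∧
    ∀ C' : Finset α, IsChainFinsetIn le S C' → C ⊆ C' → C' = C

/-- The subposet `S` is graded: in every closed interval all maximal chains
have the same length (cardinality). -/
def IsGradedIn (le : α → α → Prop) (S : Set α) : Prop :=
  ∀ a ∈ S, ∀ b ∈ S, le a b → ∀ C₁ C₂ : Finset α,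
    IsMaxChainFinsetIn le (orderInterval le S a b) C₁ →
    IsMaxChainFinsetIn le (orderInterval le S a b) C₂ → C₁.card = C₂.card

/-- `r` is a shelling order on the maximal chains of the subposet `S`: a strict
linear order on maximal chains such that whenever `m₁ < m₂`, there exist a maximal
chain `m₃ < m₂` and an element `x ∈ m₂` with `m₁ ∩ m₂ ⊆ m₃ ∩ m₂ = m₂ \ {x}`. -/
def IsShellingOrder [DecidableEq α] (le : α → α → Prop) (S : Set α)
    (r : Finset α → Finset α → Prop) : Prop :=
  (∀ C, IsMaxChainFinsetIn le S C → ¬r C C) ∧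
  (∀ C₁ C₂ C₃, IsMaxChainFinsetIn le S C₁ → IsMaxChainFinsetIn le S C₂ →
    IsMaxChainFinsetIn le S C₃ → r C₁ C₂ → r C₂ C₃ → r C₁ C₃) ∧
  (∀ C₁ C₂, IsMaxChainFinsetIn le S C₁ → IsMaxChainFinsetIn le S C₂ → C₁ ≠ C₂ →
    r C₁ C₂ ∨ r C₂ C₁) ∧
  (∀ m₁ m₂, IsMaxChainFinsetIn le S m₁ → IsMaxChainFinsetIn le S m₂ → r m₁ m₂ →
    ∃ m₃, IsMaxChainFinsetIn le S m₃ ∧ r m₃ m₂ ∧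
      ∃ x ∈ m₂, m₁ ∩ m₂ ⊆ m₃ ∩ m₂ ∧ m₃ ∩ m₂ = m₂.erase x)

/-- The subposet `S` is shellable. -/
def IsShellableIn [DecidableEq α] (le : α → α → Prop) (S : Set α) : Prop :=
  ∃ r : Finset α → Finset α → Prop, IsShellingOrder le S r
/-- The covering relation within the subposet `S`. -/
def CovRelIn (le : α → α → Prop) (S : Set α) (u v : α) : Prop :=
  u ∈ S ∧ v ∈ S ∧ le u v ∧ u ≠ v ∧ ∀ w ∈ S, le u w → le w v → w = u ∨ w = v

/-- `L` is a maximal chain of the closed interval of the subposet `S` between `a`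
and `b`, listed in increasing order: consecutive entries are covers in the
interval, the list starts at `a` and ends at `b`. -/
def IsMaxChainListIn (le : α → α → Prop) (S : Set α) (a b : α) (L : List α) : Prop :=
  (∀ z ∈ L, z ∈ orderInterval le S a b) ∧
    L.Chain' (CovRelIn le (orderInterval le S a b)) ∧
    L.head? = some a ∧ L.getLast? = some b

/-- The label sequence of a chain, listed in increasing order. -/
def labelSeq {Λ : Type*} (f : α → α → Λ) (L : List α) : List Λ :=
  (L.zip L.tail).map fun p => f p.1 p.2

/-- `f` is an EL-labeling of the subposet `S`: in every closed interval there is a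
unique maximal chain with weakly increasing label sequence, and its label
sequence is lexicographically smaller than that of every other maximal chain of
the interval. -/
def IsELShellingIn {Λ : Type*} [LinearOrder Λ] (le : α → α → Prop) (S : Set α)
    (f : α → α → Λ) : Prop :=
  ∀ a ∈ S, ∀ b ∈ S, le a b →
    ∃ L₀ : List α, IsMaxChainListIn le S a b L₀ ∧ (labelSeq f L₀).Chain' (· ≤ ·) ∧
      (∀ L : List α, IsMaxChainListIn le S a b L →
        (labelSeq f L).Chain' (· ≤ ·) → L = L₀) ∧
      (∀ L : List α, IsMaxChainListIn le S a b L → L ≠ L₀ →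
        List.Lex (· < ·) (labelSeq f L₀) (labelSeq f L))

/-- The subposet `S` is EL-shellable. -/
def IsELShellableIn (le : α → α → Prop) (S : Set α) : Prop :=
  ∃ (Λ : Type) (_ : LinearOrder Λ) (f : α → α → Λ), IsELShellingIn le S f

/-- The covering relation of the poset with order relation `le`. -/
def CovRel (le : α → α → Prop) (u v : α) : Prop :=
  le u v ∧ u ≠ v ∧ ∀ w : α, le u w → le w v → w = u ∨ w = v

/-- A sign assignment: a function assigning `±1` to each covering relation such
that every closed interval of length 3 contains exactly two maximal chains and
the product of the signs of its four covering relations is `−1`. -/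
def IsSignAssignment (le : α → α → Prop) (s : α → α → ℤ) : Prop :=
  (∀ u v : α, CovRel le u v → s u v = 1 ∨ s u v = -1) ∧
  ∀ u v : α, le u v →
    (∀ L : List α, IsMaxChainListIn le Set.univ u v L → L.length = 3) →
    ∃ p q : α, p ≠ q ∧ CovRel le u p ∧ CovRel le p v ∧ CovRel le u q ∧
      CovRel le q v ∧ (∀ w : α, CovRel le u w → CovRel le w v → w = p ∨ w = q) ∧
      s u p * s p v * s u q * s q v = -1

set_option linter.unusedSectionVars false
namespace SignAux

variable [PartialOrder α] [Fintype α] [DecidableEq α]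

lemma covRel_of_in {a b u v : α}
    (h : CovRelIn (· ≤ ·) (orderInterval (· ≤ ·) Set.univ a b) u v) :
    CovRel (· ≤ · : α → α → Prop) u v := by
  obtain ⟨hu, hv, hle, hne, hcov⟩ := h
  exact ⟨hle, hne, fun w h1 h2 =>
    hcov w ⟨trivial, hu.2.1.trans h1, h2.trans hv.2.2⟩ h1 h2⟩

section g
variable {g : α → ℤ}

lemma g_lt (hg : ∀ a b : α, CovRel (· ≤ · : α → α → Prop) a b → g b = g a + 1) :
    ∀ u v : α, u < v → g u < g v := by
  classical
  suffices H : ∀ n : ℕ, ∀ u v : α, u < v →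
      (Finset.univ.filter (fun t => u < t ∧ t ≤ v)).card = n → g u < g v by
    intro u v h; exact H _ u v h rfl
  intro n
  induction n using Nat.strong_induction_on with
  | _ n ih =>
    intro u v huv hcard
    set T := Finset.univ.filter (fun t => u < t ∧ t ≤ v) with hT
    have hvT : v ∈ T := by simp [hT, huv]
    obtain ⟨w, hwT, hwmin⟩ : ∃ w ∈ T, ∀ x ∈ T, ¬ x < w := (T.exists_minimal ⟨v, hvT⟩).imp
      fun _ h => ⟨h.1, fun _ hx => h.not_lt hx⟩
    have hwT' : u < w ∧ w ≤ v := by simpa [hT] using hwT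
    have hcov : CovRel (· ≤ · : α → α → Prop) u w := by
      refine ⟨hwT'.1.le, hwT'.1.ne, fun t h1 h2 => ?_⟩
      by_cases htu : t = u
      · exact Or.inl htu
      · have h3 : u < t := lt_of_le_of_ne h1 (Ne.symm htu)
        have htT : t ∈ T := by simp [hT, h3, h2.trans hwT'.2]
        rcases h2.lt_or_eq with h4 | h4
        · exact absurd h4 (hwmin t htT)
        · exact Or.inr h4
    have hgw : g w = g u + 1 := hg u w hcov
    by_cases hwv : w = v
    · subst hwv; omega
    · have hwv' : w < v := lt_of_le_of_ne hwT'.2 hwv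
      have hsub : Finset.univ.filter (fun t => w < t ∧ t ≤ v) ⊂ T := by
        constructor
        · intro t ht
          rw [hT]
          simp only [Finset.mem_filter, Finset.mem_univ, true_and] at ht ⊢
          exact ⟨hwT'.1.trans ht.1, ht.2⟩
        · intro hsub'
          have hw2 : w ∈ Finset.univ.filter (fun t => w < t ∧ t ≤ v) := hsub' hwT
          simp at hw2
      have := ih _ (hcard ▸ Finset.card_lt_card hsub) w v hwv' rfl
      omega

lemma g_le (hg : ∀ a b : α, CovRel (· ≤ · : α → α → Prop) a b → g b = g a + 1)
    {u v : α} (h : u ≤ v) : g u ≤ g v := by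
  rcases h.lt_or_eq with h | h
  · exact (g_lt hg u v h).le
  · rw [h]

end g

section SatL

/-- A saturated chain list from `a` to `b`: consecutive entries are covers. -/
def SatL (a b : α) (L : List α) : Prop :=
  L.Chain' (CovRel (· ≤ · : α → α → Prop)) ∧ L.head? = some a ∧ L.getLast? = some b

variable {a b : α} {L : List α} {g : α → ℤ}

lemma SatL.ne_nil (h : SatL a b L) : L ≠ [] := by
  intro hn
  rw [hn] at h
  simp [SatL] at h

lemma SatL.length_pos (h : SatL a b L) : 0 < L.length :=
  List.length_pos_iff.mpr h.ne_nil

lemma SatL.getElem_zero (h : SatL a b L) (h0 : 0 < L.length) : L[0] = a := by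
  have h1 := h.2.1
  rw [List.head?_eq_head h.ne_nil, List.head_eq_getElem] at h1
  exact Option.some_injective _ h1

lemma SatL.getElem_last (h : SatL a b L) (hl : L.length - 1 < L.length) :
    L[L.length - 1] = b := by
  have h1 := h.2.2
  rw [List.getLast?_eq_getElem?] at h1
  obtain ⟨h2, h3⟩ := List.getElem?_eq_some_iff.mp h1
  exact h3

lemma SatL.cov (h : SatL a b L) {j : ℕ} (hj : j + 1 < L.length) :
    CovRel (· ≤ · : α → α → Prop) (L[j]'(by omega)) (L[j+1]'hj) := by
  exact (List.isChain_iff_getElem.mp h.1) j hj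

lemma SatL.g_getElem (hg : ∀ a b : α, CovRel (· ≤ · : α → α → Prop) a b → g b = g a + 1)
    (h : SatL a b L) {j : ℕ} (hj : j < L.length) : g (L[j]'hj) = g a + j := by
  induction j with
  | zero => simp [h.getElem_zero hj]
  | succ k ih =>
    have hc := h.cov (j := k) hj
    rw [hg _ _ hc, ih (by omega)]
    push_cast
    ring

lemma SatL.length_eq (hg : ∀ a b : α, CovRel (· ≤ · : α → α → Prop) a b → g b = g a + 1)
    (h : SatL a b L) : (L.length : ℤ) = g b - g a + 1 := by
  have hl : L.length - 1 < L.length := by have := h.length_pos; omega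
  have h1 := h.g_getElem hg hl
  rw [h.getElem_last hl] at h1
  have h2 := h.length_pos
  have : ((L.length - 1 : ℕ) : ℤ) = (L.length : ℤ) - 1 := by omega
  omega

lemma SatL.le_getElem (h : SatL a b L) {i j : ℕ} (hij : i ≤ j) (hj : j < L.length) :
    L[i]'(by omega) ≤ L[j]'hj := by
  induction j with
  | zero =>
    have : i = 0 := by omega
    subst this
    rfl
  | succ k ih =>
    rcases Nat.eq_or_lt_of_le hij with h1 | h1
    · subst h1; rfl
    · exact le_trans (ih (by omega) (by omega)) (h.cov hj).1

lemma SatL.nodup (hg : ∀ a b : α, CovRel (· ≤ · : α → α → Prop) a b → g b = g a + 1)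
    (h : SatL a b L) : L.Nodup := by
  rw [List.nodup_iff_injective_get]
  intro i j hij
  have hi := h.g_getElem hg i.2
  have hj := h.g_getElem hg j.2
  simp only [List.get_eq_getElem] at hij
  rw [hij] at hi
  rw [hj] at hi
  ext
  omega

lemma SatL.mem_le (h : SatL a b L) {x : α} (hx : x ∈ L) : a ≤ x ∧ x ≤ b := by
  obtain ⟨n, hn, rfl⟩ := List.mem_iff_getElem.mp hx
  constructor
  · have := h.le_getElem (Nat.zero_le n) hn
    rwa [h.getElem_zero (by omega)] at this
  · have := h.le_getElem (show n ≤ L.length - 1 by omega) (by omega)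
    rwa [h.getElem_last (by omega)] at this

lemma SatL.index_eq (hg : ∀ a b : α, CovRel (· ≤ · : α → α → Prop) a b → g b = g a + 1)
    (h : SatL a b L) {x : α} {j : ℕ} (hx : x ∈ L) (hj : j < L.length)
    (hgx : g x = g a + j) : x = L[j]'hj := by
  obtain ⟨n, hn, rfl⟩ := List.mem_iff_getElem.mp hx
  have := h.g_getElem hg hn
  have hnj : n = j := by omega
  subst hnj
  rfl

lemma SatL.toFinset_eq (hg : ∀ a b : α, CovRel (· ≤ · : α → α → Prop) a b → g b = g a + 1)
    {L' : List α} (h : SatL a b L) (h' : SatL a b L')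
    (hf : L.toFinset = L'.toFinset) : L = L' := by
  have hlen : L.length = L'.length := by
    have h1 := List.toFinset_card_of_nodup (h.nodup hg)
    have h2 := List.toFinset_card_of_nodup (h'.nodup hg)
    rw [hf] at h1
    omega
  apply List.ext_getElem hlen
  intro n h1 h2
  have hmem : L'[n] ∈ L := by
    rw [← List.mem_toFinset, hf, List.mem_toFinset]
    exact List.getElem_mem h2
  have := h.index_eq hg hmem h1 (h'.g_getElem hg h2)
  exact this.symm

end SatL


section Chains

variable {a b : α} {L : List α} {g : α → ℤ}

lemma SatL.chainFinset (h : SatL a b L) :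
    IsChainFinsetIn (· ≤ · : α → α → Prop) (Set.Icc a b) L.toFinset := by
  constructor
  · intro x hx
    have hx' : x ∈ L := by simpa using hx
    exact Set.mem_Icc.mpr (h.mem_le hx')
  · intro u hu v hv huv
    obtain ⟨i, hi, rfl⟩ := List.mem_iff_getElem.mp (List.mem_toFinset.mp hu)
    obtain ⟨j, hj, rfl⟩ := List.mem_iff_getElem.mp (List.mem_toFinset.mp hv)
    rcases le_total i j with hij | hij
    · exact Or.inl (h.le_getElem hij hj)
    · exact Or.inr (h.le_getElem hij hi)

lemma SatL.maxChainFinset (hg : ∀ a b : α, CovRel (· ≤ · : α → α → Prop) a b → g b = g a + 1)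
    (h : SatL a b L) :
    IsMaxChainFinsetIn (· ≤ · : α → α → Prop) (Set.Icc a b) L.toFinset := by
  refine ⟨h.chainFinset, ?_⟩
  intro C' hC' hsub
  apply Finset.Subset.antisymm _ hsub
  intro t ht
  have htI : t ∈ Set.Icc a b := hC'.1 (Finset.mem_coe.mpr ht)
  have hga : g a ≤ g t := g_le hg htI.1
  have hgb : g t ≤ g b := g_le hg htI.2
  have hlen := h.length_eq hg
  have hj : (g t - g a).toNat < L.length := by omega
  set y := L[(g t - g a).toNat]'hj with hy
  have hyL : y ∈ L := List.getElem_mem hj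
  have hyC : y ∈ C' := hsub (List.mem_toFinset.mpr hyL)
  have hgy : g y = g t := by
    have h1 := h.g_getElem hg hj
    rw [← hy] at h1
    omega
  by_cases hty : t = y
  · rw [hty]; exact List.mem_toFinset.mpr hyL
  · rcases hC'.2 t ht y hyC hty with hle | hle
    · have := g_lt hg t y (lt_of_le_of_ne hle hty)
      omega
    · have := g_lt hg y t (lt_of_le_of_ne hle (Ne.symm hty))
      omega

lemma maxChain_exists (hab : a ≤ b) :
    ∃ C, IsMaxChainFinsetIn (· ≤ · : α → α → Prop) (Set.Icc a b) C := by
  classical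
  set 𝒞 : Finset (Finset α) :=
    Finset.univ.filter (fun C => IsChainFinsetIn (· ≤ · : α → α → Prop) (Set.Icc a b) C)
    with h𝒞
  have hne : 𝒞.Nonempty := by
    refine ⟨∅, ?_⟩
    rw [h𝒞]
    rw [Finset.mem_filter]
    simp [IsChainFinsetIn]
  obtain ⟨C, hC, hmax⟩ := 𝒞.exists_max_image Finset.card hne
  rw [h𝒞, Finset.mem_filter] at hC
  refine ⟨C, hC.2, ?_⟩
  intro C' hC' hsub
  have hC'mem : C' ∈ 𝒞 := by rw [h𝒞, Finset.mem_filter]; exact ⟨Finset.mem_univ _, hC'⟩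
  exact (Finset.eq_of_subset_of_card_le hsub (hmax C' hC'mem)).symm

lemma maxChain_toSatL {b : α} : ∀ (n : ℕ) (a : α) (C : Finset α), C.card = n → a ≤ b →
    IsMaxChainFinsetIn (· ≤ · : α → α → Prop) (Set.Icc a b) C →
    ∃ L, SatL a b L ∧ L.toFinset = C := by
  intro n
  induction n using Nat.strong_induction_on with
  | _ n ih =>
  intro a C hcard hab hC
  have haC : a ∈ C := by
    have h1 : IsChainFinsetIn (· ≤ · : α → α → Prop) (Set.Icc a b) (insert a C) := by
      constructor
      · intro x hx
        rcases Finset.mem_insert.mp (by simpa using hx) with rfl | hx'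
        · exact Set.mem_Icc.mpr ⟨le_refl _, hab⟩
        · exact hC.1.1 (Finset.mem_coe.mpr hx')
      · intro u hu v hv huv
        rcases Finset.mem_insert.mp hu with rfl | hu'
        · rcases Finset.mem_insert.mp hv with rfl | hv'
          · exact absurd rfl huv
          · exact Or.inl (hC.1.1 (Finset.mem_coe.mpr hv')).1
        · rcases Finset.mem_insert.mp hv with rfl | hv'
          · exact Or.inr (hC.1.1 (Finset.mem_coe.mpr hu')).1
          · exact hC.1.2 u hu' v hv' huv
    have h2 := hC.2 _ h1 (Finset.subset_insert a C)
    rw [← h2]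
    exact Finset.mem_insert_self a C
  by_cases hab' : a = b
  · subst hab'
    have hCa : C = {a} := by
      apply Finset.eq_singleton_iff_unique_mem.mpr
      refine ⟨haC, fun x hx => ?_⟩
      have := Set.mem_Icc.mp (hC.1.1 (Finset.mem_coe.mpr hx))
      exact le_antisymm this.2 this.1
    exact ⟨[a], ⟨List.isChain_singleton a, by simp, by simp⟩, by simp [hCa]⟩
  · have hbC : b ∈ C := by
      have h1 : IsChainFinsetIn (· ≤ · : α → α → Prop) (Set.Icc a b) (insert b C) := by
        constructor
        · intro x hx
          rcases Finset.mem_insert.mp (by simpa using hx) with rfl | hx'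
          · exact Set.mem_Icc.mpr ⟨hab, le_refl _⟩
          · exact hC.1.1 (Finset.mem_coe.mpr hx')
        · intro u hu v hv huv
          rcases Finset.mem_insert.mp hu with rfl | hu'
          · rcases Finset.mem_insert.mp hv with rfl | hv'
            · exact absurd rfl huv
            · exact Or.inr (hC.1.1 (Finset.mem_coe.mpr hv')).2
          · rcases Finset.mem_insert.mp hv with rfl | hv'
            · exact Or.inl (hC.1.1 (Finset.mem_coe.mpr hu')).2
            · exact hC.1.2 u hu' v hv' huv
      have h2 := hC.2 _ h1 (Finset.subset_insert b C)
      rw [← h2]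
      exact Finset.mem_insert_self b C
    have hne : (C.erase a).Nonempty := ⟨b, Finset.mem_erase.mpr ⟨Ne.symm hab', hbC⟩⟩
    obtain ⟨w, hw, hwmin⟩ : ∃ w ∈ C.erase a, ∀ x ∈ C.erase a, ¬ x < w :=
      ((C.erase a).exists_minimal hne).imp fun _ h => ⟨h.1, fun _ hx => h.not_lt hx⟩
    have hwC : w ∈ C := (Finset.mem_erase.mp hw).2
    have hwa : w ≠ a := (Finset.mem_erase.mp hw).1
    have hwI := Set.mem_Icc.mp (hC.1.1 (Finset.mem_coe.mpr hwC))
    have haw : a < w := lt_of_le_of_ne hwI.1 (Ne.symm hwa)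
    have hwle : ∀ c ∈ C.erase a, w ≤ c := by
      intro c hc
      by_cases hcw : c = w
      · exact le_of_eq hcw.symm
      · rcases hC.1.2 c (Finset.mem_erase.mp hc).2 w hwC hcw with h1 | h1
        · exact absurd (lt_of_le_of_ne h1 hcw) (hwmin c hc)
        · exact h1
    have hcov : CovRel (· ≤ · : α → α → Prop) a w := by
      refine ⟨haw.le, haw.ne, fun t h1 h2 => ?_⟩
      by_cases hta : t = a
      · exact Or.inl hta
      · have htI : t ∈ Set.Icc a b := Set.mem_Icc.mpr ⟨h1, h2.trans hwI.2⟩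
        have hch : IsChainFinsetIn (· ≤ · : α → α → Prop) (Set.Icc a b) (insert t C) := by
          constructor
          · intro x hx
            rcases Finset.mem_insert.mp (by simpa using hx) with rfl | hx'
            · exact htI
            · exact hC.1.1 (Finset.mem_coe.mpr hx')
          · intro u hu v hv huv
            have key : ∀ v' ∈ C, v' ≠ t → t ≤ v' ∨ v' ≤ t := by
              intro v' hv' hvt
              by_cases hva : v' = a
              · exact Or.inr (hva ▸ h1)
              · exact Or.inl (h2.trans (hwle v' (Finset.mem_erase.mpr ⟨hva, hv'⟩)))
            rcases Finset.mem_insert.mp hu with rfl | hu'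
            · rcases Finset.mem_insert.mp hv with rfl | hv'
              · exact absurd rfl huv
              · exact key v hv' (Ne.symm huv)
            · rcases Finset.mem_insert.mp hv with rfl | hv'
              · exact (key u hu' huv).symm
              · exact hC.1.2 u hu' v hv' huv
        have h3 := hC.2 _ hch (Finset.subset_insert t C)
        have htC : t ∈ C := by rw [← h3]; exact Finset.mem_insert_self t C
        have := hwle t (Finset.mem_erase.mpr ⟨hta, htC⟩)
        exact Or.inr (le_antisymm h2 this)
    have hC' : IsMaxChainFinsetIn (· ≤ · : α → α → Prop) (Set.Icc w b) (C.erase a) := by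
      constructor
      · constructor
        · intro x hx
          have hx' : x ∈ C.erase a := Finset.mem_coe.mp hx
          exact Set.mem_Icc.mpr ⟨hwle x hx',
            (Set.mem_Icc.mp (hC.1.1 (Finset.mem_coe.mpr (Finset.mem_erase.mp hx').2))).2⟩
        · intro u hu v hv huv
          exact hC.1.2 u (Finset.mem_erase.mp hu).2 v (Finset.mem_erase.mp hv).2 huv
      · intro C'' hch hsub
        have haC'' : a ∉ C'' := by
          intro hmem
          have := (Set.mem_Icc.mp (hch.1 (Finset.mem_coe.mpr hmem))).1
          exact absurd this (not_le_of_gt haw)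
        have hins : IsChainFinsetIn (· ≤ · : α → α → Prop) (Set.Icc a b) (insert a C'') := by
          constructor
          · intro x hx
            rcases Finset.mem_insert.mp (by simpa using hx) with rfl | hx'
            · exact Set.mem_Icc.mpr ⟨le_refl _, hab⟩
            · have := Set.mem_Icc.mp (hch.1 (Finset.mem_coe.mpr hx'))
              exact Set.mem_Icc.mpr ⟨haw.le.trans this.1, this.2⟩
          · intro u hu v hv huv
            have key : ∀ v' ∈ C'', a ≤ v' := fun v' hv' =>
              haw.le.trans (Set.mem_Icc.mp (hch.1 (Finset.mem_coe.mpr hv'))).1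
            rcases Finset.mem_insert.mp hu with rfl | hu'
            · rcases Finset.mem_insert.mp hv with rfl | hv'
              · exact absurd rfl huv
              · exact Or.inl (key v hv')
            · rcases Finset.mem_insert.mp hv with rfl | hv'
              · exact Or.inr (key u hu')
              · exact hch.2 u hu' v hv' huv
        have hCsub : C ⊆ insert a C'' := by
          intro c hc
          by_cases hca : c = a
          · exact hca ▸ Finset.mem_insert_self a C''
          · exact Finset.mem_insert_of_mem (hsub (Finset.mem_erase.mpr ⟨hca, hc⟩))
        have heq := hC.2 _ hins hCsub
        apply Finset.Subset.antisymm _ hsub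
        intro x hx
        have hxC : x ∈ C := by rw [← heq]; exact Finset.mem_insert_of_mem hx
        refine Finset.mem_erase.mpr ⟨fun hxa => haC'' (hxa ▸ hx), hxC⟩
    have hcarderase : (C.erase a).card < n := hcard ▸ Finset.card_erase_lt_of_mem haC
    obtain ⟨L', hL', hLf⟩ := ih _ hcarderase w (C.erase a) rfl hwI.2 hC'
    have hL'ne := hL'.ne_nil
    refine ⟨a :: L', ⟨?_, by simp, ?_⟩, ?_⟩
    · unfold List.Chain'
      rw [List.isChain_cons]
      refine ⟨fun y hy => ?_, hL'.1⟩
      rw [hL'.2.1] at hy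
      exact (Option.mem_some_iff.mp hy) ▸ hcov
    · obtain ⟨y, t, rfl⟩ := List.exists_cons_of_ne_nil hL'ne
      rw [List.getLast?_cons_cons]
      exact hL'.2.2
    · simp only [List.toFinset_cons, hLf]
      exact Finset.insert_erase haC

end Chains

section W

variable (r : α → α → ℤ) (d : α)

/-- product of `r` along consecutive pairs of `L`. -/
def W (L : List α) : ℤ :=
  ∏ j ∈ Finset.range (L.length - 1), r (L.getD j d) (L.getD (j+1) d)

variable {a b : α} {L : List α} {g : α → ℤ}

lemma W_pm (hr1 : ∀ u v : α, CovRel (· ≤ · : α → α → Prop) u v → r u v = 1 ∨ r u v = -1)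
    (h : SatL a b L) : W r d L = 1 ∨ W r d L = -1 := by
  apply Finset.prod_induction _ (fun t => t = 1 ∨ t = -1)
  · rintro p q (rfl | rfl) (rfl | rfl) <;> norm_num
  · exact Or.inl rfl
  · intro j hj
    rw [Finset.mem_range] at hj
    have hj' : j + 1 < L.length := by have := h.length_pos; omega
    rw [List.getD_eq_getElem _ _ (by omega), List.getD_eq_getElem _ _ hj']
    exact hr1 _ _ (h.cov hj')

lemma W_append {c : α} (h : SatL a b L) :
    W r d (L ++ [c]) = W r d L * r b c := by
  have hn := h.length_pos
  have hl1 : (L ++ [c]).length - 1 = (L.length - 1) + 1 := by simp; omega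
  rw [W, hl1, Finset.prod_range_succ]
  congr 1
  · rw [W]
    apply Finset.prod_congr rfl
    intro j hj
    rw [Finset.mem_range] at hj
    have e1 : (L ++ [c]).getD j d = L.getD j d := by
      rw [List.getD_eq_getElem _ _ (by simp; omega), List.getD_eq_getElem _ _ (by omega)]
      exact List.getElem_append_left (by omega)
    have e2 : (L ++ [c]).getD (j+1) d = L.getD (j+1) d := by
      rw [List.getD_eq_getElem _ _ (by simp; omega), List.getD_eq_getElem _ _ (by omega)]
      exact List.getElem_append_left (by omega)
    rw [e1, e2]
  · have e1 : (L ++ [c]).getD (L.length - 1) d = b := by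
      rw [List.getD_eq_getElem _ _ (by simp <;> omega), List.getElem_append_left (by omega)]
      exact h.getElem_last (by omega)
    have e2 : (L ++ [c]).getD ((L.length - 1) + 1) d = c := by
      rw [List.getD_eq_getElem _ _ (by simp; omega)]
      exact List.getElem_concat_length (by omega) _
    rw [e1, e2]

set_option maxHeartbeats 1000000 in
lemma W_swap (hg : ∀ a b : α, CovRel (· ≤ · : α → α → Prop) a b → g b = g a + 1)
    (hr2 : ∀ u x x' v : α, x ≠ x' → CovRel (· ≤ · : α → α → Prop) u x →
      CovRel (· ≤ · : α → α → Prop) x v → CovRel (· ≤ · : α → α → Prop) u x' →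
      CovRel (· ≤ · : α → α → Prop) x' v → r u x * r x v = r u x' * r x' v)
    {L' : List α} (h : SatL a b L) (h' : SatL a b L') {x : α}
    (hx : x ∈ L.toFinset) (hint : L'.toFinset ∩ L.toFinset = L.toFinset.erase x) :
    W r d L' = W r d L := by
  have hlen : L'.length = L.length := by
    have e1 := h.length_eq hg
    have e2 := h'.length_eq hg
    omega
  by_cases hLL : L' = L
  · rw [hLL]
  have hn := h.length_pos
  set n := L.length with hnn
  obtain ⟨i, hi, hxi⟩ := List.mem_iff_getElem.mp (List.mem_toFinset.mp hx)
  have hgx : g x = g a + i := by rw [← hxi]; exact h.g_getElem hg hi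
  -- a and b are different from x
  have haL' : a ∈ L'.toFinset := by
    rw [List.mem_toFinset]
    have : L'[0]'(by omega) ∈ L' := List.getElem_mem _
    rwa [h'.getElem_zero (by omega)] at this
  have hbL' : b ∈ L'.toFinset := by
    rw [List.mem_toFinset]
    have : L'[L'.length - 1]'(by omega) ∈ L' := List.getElem_mem _
    rwa [h'.getElem_last (by omega)] at this
  have hax : a ≠ x := by
    have : a ∈ L.toFinset.erase x := by
      rw [← hint]
      exact Finset.mem_inter.mpr ⟨haL', by
        rw [List.mem_toFinset]
        have : L[0]'(by omega) ∈ L := List.getElem_mem _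
        rwa [h.getElem_zero (by omega)] at this⟩
    exact (Finset.mem_erase.mp this).1
  have hbx : b ≠ x := by
    have : b ∈ L.toFinset.erase x := by
      rw [← hint]
      exact Finset.mem_inter.mpr ⟨hbL', by
        rw [List.mem_toFinset]
        have : L[n - 1]'(by omega) ∈ L := List.getElem_mem _
        rwa [h.getElem_last (by omega)] at this⟩
    exact (Finset.mem_erase.mp this).1
  have hga : g a ≤ g x := by rw [hgx]; omega
  have hi0 : i ≠ 0 := by
    intro h0
    subst h0
    exact hax (by rw [← hxi]; exact (h.getElem_zero (by omega)).symm)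
  have hin : i ≠ n - 1 := by
    intro h0
    apply hbx
    have hbmem : b ∈ L := by
      have h5 : L[n - 1]'(by omega) ∈ L := List.getElem_mem _
      rwa [h.getElem_last (by omega)] at h5
    have e2 := h.length_eq hg
    have hgb : g b = g a + i := by omega
    have h6 := h.index_eq hg hbmem hi hgb
    rw [h6, hxi]
  -- entries away from i coincide
  have key : ∀ j (hj : j < n), j ≠ i → L'[j]'(by omega) = L[j]'hj := by
    intro j hj hji
    have hLjx : L[j]'hj ≠ x := by
      intro hLj
      have := h.g_getElem hg hj
      rw [hLj, hgx] at this
      omega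
    have hLj : L[j]'hj ∈ L'.toFinset := by
      have h1 : L[j]'hj ∈ L.toFinset.erase x :=
        Finset.mem_erase.mpr ⟨hLjx, List.mem_toFinset.mpr (List.getElem_mem _)⟩
      rw [← hint] at h1
      exact (Finset.mem_inter.mp h1).1
    have := h'.index_eq hg (List.mem_toFinset.mp hLj) (by omega : j < L'.length)
      (by rw [h.g_getElem hg hj])
    exact this.symm
  -- x' the replaced element
  have hxL' : x ∉ L'.toFinset := by
    intro hmem
    have : x ∈ L.toFinset.erase x := by rw [← hint]; exact Finset.mem_inter.mpr ⟨hmem, hx⟩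
    simp at this
  obtain ⟨k, rfl⟩ : ∃ k, i = k + 1 := ⟨i - 1, by omega⟩
  have hk2 : k + 2 < n := by omega
  set x' := L'[k+1]'(by omega) with hx'
  have hx'x : x' ≠ x := by
    intro hh
    apply hxL'
    rw [← hh, hx']
    exact List.mem_toFinset.mpr (List.getElem_mem _)
  -- the four covers
  have hcov1 : CovRel (· ≤ · : α → α → Prop) (L[k]'(by omega)) (L[k+1]'(by omega)) :=
    h.cov (by omega)
  have hcov2 : CovRel (· ≤ · : α → α → Prop) (L[k+1]'(by omega)) (L[k+2]'(by omega)) :=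
    h.cov hk2
  have hcov3 : CovRel (· ≤ · : α → α → Prop) (L[k]'(by omega)) x' := by
    have := h'.cov (show k + 1 < L'.length by omega)
    rwa [key k (by omega) (by omega)] at this
  have hcov4 : CovRel (· ≤ · : α → α → Prop) x' (L[k+2]'(by omega)) := by
    have := h'.cov (show (k+1) + 1 < L'.length by omega)
    rwa [key (k+2) (by omega) (by omega)] at this
  have hdiam : r (L[k]'(by omega)) x' * r x' (L[k+2]'(by omega)) =
      r (L[k]'(by omega)) (L[k+1]'(by omega)) * r (L[k+1]'(by omega)) (L[k+2]'(by omega)) :=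
    (hr2 _ _ _ _ (by rw [hxi]; exact fun hh => hx'x hh.symm) hcov1 hcov2 hcov3 hcov4).symm
  -- compare the products
  have keyD : ∀ j, j < n → j ≠ k + 1 → L'.getD j d = L.getD j d := by
    intro j hj hji
    rw [List.getD_eq_getElem _ _ (show j < L'.length by omega),
        List.getD_eq_getElem _ _ (show j < L.length by omega)]
    exact key j (by omega) hji
  have hx'D : L'.getD (k+1) d = x' := List.getD_eq_getElem _ _ (by omega)
  have hW' : W r d L' = ∏ j ∈ Finset.range (n - 1), r (L'.getD j d) (L'.getD (j+1) d) := by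
    rw [W, hlen]
  have hWL : W r d L = ∏ j ∈ Finset.range (n - 1), r (L.getD j d) (L.getD (j+1) d) := by
    rw [W, ← hnn]
  have e : ∀ j ∈ ((Finset.range (n-1)).erase k).erase (k+1),
      r (L'.getD j d) (L'.getD (j+1) d) = r (L.getD j d) (L.getD (j+1) d) := by
    intro j hj
    simp only [Finset.mem_erase, Finset.mem_range] at hj
    rw [keyD j (by omega) hj.1, keyD (j+1) (by omega) (by omega)]
  have ek : r (L'.getD k d) (L'.getD (k+1) d) * r (L'.getD (k+1) d) (L'.getD (k+1+1) d)
      = r (L.getD k d) (L.getD (k+1) d) * r (L.getD (k+1) d) (L.getD (k+1+1) d) := by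
    rw [keyD k (by omega) (by omega), keyD (k+1+1) (by omega) (by omega), hx'D]
    have e1 : L.getD k d = L[k]'(by omega) := List.getD_eq_getElem _ _ (by omega)
    have e2 : L.getD (k+1) d = L[k+1]'(by omega) := List.getD_eq_getElem _ _ (by omega)
    have e3 : L.getD (k+1+1) d = L[k+2]'(by omega) := List.getD_eq_getElem _ _ (by omega)
    rw [e1, e2, e3]
    exact hdiam
  have hFk : k ∈ Finset.range (n-1) := by simp; omega
  have hFk1 : k + 1 ∈ (Finset.range (n-1)).erase k := by simp; omega
  have hP : (∏ j ∈ ((Finset.range (n-1)).erase k).erase (k+1),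
        r (L'.getD j d) (L'.getD (j+1) d))
      = ∏ j ∈ ((Finset.range (n-1)).erase k).erase (k+1),
        r (L.getD j d) (L.getD (j+1) d) := Finset.prod_congr rfl e
  rw [hW', hWL, ← Finset.mul_prod_erase _ (fun j => r (L'.getD j d) (L'.getD (j+1) d)) hFk,
    ← Finset.mul_prod_erase _ (fun j => r (L'.getD j d) (L'.getD (j+1) d)) hFk1,
    ← Finset.mul_prod_erase _ (fun j => r (L.getD j d) (L.getD (j+1) d)) hFk,
    ← Finset.mul_prod_erase _ (fun j => r (L.getD j d) (L.getD (j+1) d)) hFk1,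
    hP, ← mul_assoc, ← mul_assoc, ek]

lemma W_inv (hg : ∀ a b : α, CovRel (· ≤ · : α → α → Prop) a b → g b = g a + 1)
    (hr2 : ∀ u x x' v : α, x ≠ x' → CovRel (· ≤ · : α → α → Prop) u x →
      CovRel (· ≤ · : α → α → Prop) x v → CovRel (· ≤ · : α → α → Prop) u x' →
      CovRel (· ≤ · : α → α → Prop) x' v → r u x * r x v = r u x' * r x' v)
    (hab : a ≤ b) (hsh : IsShellableIn (· ≤ · : α → α → Prop) (Set.Icc a b))
    {L' : List α} (h : SatL a b L) (h' : SatL a b L') :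
    W r d L = W r d L' := by
  classical
  obtain ⟨ρ, hirr, htrans, htot, hlast⟩ := hsh
  set Mx := IsMaxChainFinsetIn (· ≤ · : α → α → Prop) (Set.Icc a b) with hMx
  set npred : Finset α → ℕ :=
    fun C => (Finset.univ.filter (fun D => Mx D ∧ ρ D C)).card with hnpred
  suffices H : ∀ (m : ℕ) (L₁ L₂ : List α), SatL a b L₁ → SatL a b L₂ →
      npred L₁.toFinset + npred L₂.toFinset = m → W r d L₁ = W r d L₂ by
    exact H _ L L' h h' rfl
  intro m
  induction m using Nat.strong_induction_on with
  | _ m ih =>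
  intro L₁ L₂ h₁ h₂ hm
  by_cases heq : L₁.toFinset = L₂.toFinset
  · rw [h₁.toFinset_eq hg h₂ heq]
  · have hM₁ : Mx L₁.toFinset := h₁.maxChainFinset hg
    have hM₂ : Mx L₂.toFinset := h₂.maxChainFinset hg
    have reduce : ∀ L₄ L₅ : List α, SatL a b L₄ → SatL a b L₅ →
        ρ L₄.toFinset L₅.toFinset →
        npred L₄.toFinset + npred L₅.toFinset = m → W r d L₄ = W r d L₅ := by
      intro L₄ L₅ h₄ h₅ hρ45 hm'
      have hM₄ : Mx L₄.toFinset := h₄.maxChainFinset hg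
      have hM₅ : Mx L₅.toFinset := h₅.maxChainFinset hg
      obtain ⟨m₃, hM₃, hρ3, x, hxm, _, hintm⟩ := hlast _ _ hM₄ hM₅ hρ45
      obtain ⟨L₃, hL₃, hL₃f⟩ := maxChain_toSatL _ a m₃ rfl hab hM₃
      have hswap : W r d L₃ = W r d L₅ := by
        apply W_swap r d hg hr2 h₅ hL₃ hxm
        rw [hL₃f]
        exact hintm
      have hlt : npred L₃.toFinset < npred L₅.toFinset := by
        rw [hnpred, hL₃f]
        apply Finset.card_lt_card
        constructor
        · intro D hD
          simp only [Finset.mem_filter, Finset.mem_univ, true_and] at hD ⊢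
          exact ⟨hD.1, htrans D m₃ L₅.toFinset hD.1 hM₃ hM₅ hD.2 hρ3⟩
        · intro hcon
          have hm3 : m₃ ∈ Finset.univ.filter (fun D => Mx D ∧ ρ D L₅.toFinset) := by
            simp only [Finset.mem_filter, Finset.mem_univ, true_and]
            exact ⟨hM₃, hρ3⟩
          have := hcon hm3
          simp only [Finset.mem_filter, Finset.mem_univ, true_and] at this
          exact hirr m₃ hM₃ this.2
      have hrec := ih (npred L₄.toFinset + npred L₃.toFinset) (by omega) L₄ L₃ h₄ hL₃ rfl
      rw [hrec, hswap]
    rcases htot _ _ hM₁ hM₂ heq with hρ12 | hρ21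
    · exact reduce L₁ L₂ h₁ h₂ hρ12 hm
    · exact (reduce L₂ L₁ h₂ h₁ hρ21 (by omega)).symm

end W

section Diamond

variable {g : α → ℤ}

lemma satl_of_maxChainList {u v : α} {L : List α}
    (hL : IsMaxChainListIn (· ≤ · : α → α → Prop) Set.univ u v L) : SatL u v L := by
  obtain ⟨hmem, hch, hh, hl⟩ := hL
  exact ⟨hch.imp (fun {p q} h => covRel_of_in h), hh, hl⟩

lemma diamond_one (hg : ∀ a b : α, CovRel (· ≤ · : α → α → Prop) a b → g b = g a + 1)
    {t : α → α → ℤ} (ht : IsSignAssignment (· ≤ · : α → α → Prop) t)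
    {u x x' v : α} (hxx : x ≠ x') (h1 : CovRel (· ≤ · : α → α → Prop) u x)
    (h2 : CovRel (· ≤ · : α → α → Prop) x v) (h3 : CovRel (· ≤ · : α → α → Prop) u x')
    (h4 : CovRel (· ≤ · : α → α → Prop) x' v) :
    t u x * t x v * t u x' * t x' v = -1 := by
  have huv : u ≤ v := h1.1.trans h2.1
  have h3len : ∀ L : List α, IsMaxChainListIn (· ≤ · : α → α → Prop) Set.univ u v L →
      L.length = 3 := by
    intro L hL
    have hsat := satl_of_maxChainList hL
    have hlen := hsat.length_eq hg
    have hgv : g v = g u + 2 := by rw [hg _ _ h2, hg _ _ h1]; ring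
    omega
  obtain ⟨p, q, hpq, hup, hpv, huq, hqv, huniq, hprod⟩ := ht.2 u v huv h3len
  rcases huniq x h1 h2 with rfl | rfl
  · rcases huniq x' h3 h4 with rfl | rfl
    · exact absurd rfl hxx
    · exact hprod
  · rcases huniq x' h3 h4 with rfl | rfl
    · linear_combination hprod
    · exact absurd rfl hxx

lemma r_diamond (hg : ∀ a b : α, CovRel (· ≤ · : α → α → Prop) a b → g b = g a + 1)
    {s s' : α → α → ℤ} (hs : IsSignAssignment (· ≤ · : α → α → Prop) s)
    (hs' : IsSignAssignment (· ≤ · : α → α → Prop) s')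
    (u x x' v : α) (hxx : x ≠ x') (h1 : CovRel (· ≤ · : α → α → Prop) u x)
    (h2 : CovRel (· ≤ · : α → α → Prop) x v) (h3 : CovRel (· ≤ · : α → α → Prop) u x')
    (h4 : CovRel (· ≤ · : α → α → Prop) x' v) :
    (s' u x * s u x) * (s' x v * s x v) = (s' u x' * s u x') * (s' x' v * s x' v) := by
  have A := diamond_one hg hs hxx h1 h2 h3 h4
  have A' := diamond_one hg hs' hxx h1 h2 h3 h4
  have hmul : ((s' u x * s u x) * (s' x v * s x v)) *
      ((s' u x' * s u x') * (s' x' v * s x' v)) = 1 := by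
    calc ((s' u x * s u x) * (s' x v * s x v)) *
        ((s' u x' * s u x') * (s' x' v * s x' v))
        = (s' u x * s' x v * s' u x' * s' x' v) * (s u x * s x v * s u x' * s x' v) := by
          ring
      _ = 1 := by rw [A', A]; norm_num
  have hp1 : (s' u x * s u x) * (s' x v * s x v) = 1 ∨
      (s' u x * s u x) * (s' x v * s x v) = -1 := by
    rcases hs.1 u x h1 with e1 | e1 <;> rcases hs.1 x v h2 with e2 | e2 <;>
      rcases hs'.1 u x h1 with e3 | e3 <;> rcases hs'.1 x v h2 with e4 | e4 <;>
      rw [e1, e2, e3, e4] <;> norm_num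
  rcases hp1 with h | h <;> rw [h] at hmul ⊢ <;> linarith

end Diamond

end SignAux

/-- Let `P` be a finite poset with a unique minimal element,
a grading assignment, and shellable closed intervals.  Then any two sign
assignments on `P` are equivalent: `s'` is obtained from `s` by a finite
sequence of moves, each reversing the signs of all covering relations involving
a chosen element; equivalently, there is `ε : P → {±1}` with
`s' (u ⋖ v) = ε u · ε v · s (u ⋖ v)` on all covering relations. -/
theorem sign_assignments_equivalent
    [PartialOrder α] [Fintype α] [DecidableEq α]
    (z : α) (hmin : IsMin z) (huniq : ∀ w : α, IsMin w → w = z)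
    (g : α → ℤ)
    (hg : ∀ a b : α, CovRel (· ≤ · : α → α → Prop) a b → g b = g a + 1)
    (hshell : ∀ a b : α, a ≤ b →
      IsShellableIn (· ≤ · : α → α → Prop) (Set.Icc a b))
    (s s' : α → α → ℤ)
    (hs : IsSignAssignment (· ≤ · : α → α → Prop) s)
    (hs' : IsSignAssignment (· ≤ · : α → α → Prop) s') :
    ∃ ε : α → ℤ, (∀ p : α, ε p = 1 ∨ ε p = -1) ∧
      ∀ u v : α, CovRel (· ≤ · : α → α → Prop) u v →
        s' u v = ε u * ε v * s u v := by
  classical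
  set r : α → α → ℤ := fun p q => s' p q * s p q with hrdef
  have hr1 : ∀ u v : α, CovRel (· ≤ · : α → α → Prop) u v → r u v = 1 ∨ r u v = -1 := by
    intro u v hc
    rcases hs.1 u v hc with h1 | h1 <;> rcases hs'.1 u v hc with h2 | h2 <;>
      rw [hrdef] <;> simp [h1, h2]
  have hr2 : ∀ u x x' v : α, x ≠ x' → CovRel (· ≤ · : α → α → Prop) u x →
      CovRel (· ≤ · : α → α → Prop) x v → CovRel (· ≤ · : α → α → Prop) u x' →
      CovRel (· ≤ · : α → α → Prop) x' v → r u x * r x v = r u x' * r x' v := by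
    intro u x x' v hxx h1 h2 h3 h4
    exact SignAux.r_diamond hg hs hs' u x x' v hxx h1 h2 h3 h4
  have hz : ∀ p : α, z ≤ p := by
    intro p
    obtain ⟨m, hm, hmmin⟩ : ∃ m ∈ Finset.univ.filter (· ≤ p), ∀ x ∈ Finset.univ.filter (· ≤ p), ¬ x < m :=
      ((Finset.univ.filter (· ≤ p)).exists_minimal
      ⟨p, by simp⟩).imp fun _ h => ⟨h.1, fun _ hx => h.not_lt hx⟩
    simp only [Finset.mem_filter, Finset.mem_univ, true_and] at hm
    have hminm : IsMin m := by
      intro w hw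
      have hwmem : w ∈ Finset.univ.filter (· ≤ p) := by
        simp only [Finset.mem_filter, Finset.mem_univ, true_and]
        exact hw.trans hm
      rcases hw.lt_or_eq with h | h
      · exact absurd h (hmmin w hwmem)
      · exact le_of_eq h.symm
    have := huniq m hminm
    rw [← this]
    exact hm
  have hex : ∀ p : α, ∃ L, SignAux.SatL z p L := by
    intro p
    obtain ⟨C, hC⟩ := SignAux.maxChain_exists (hz p)
    obtain ⟨L, hL, _⟩ := SignAux.maxChain_toSatL _ z C rfl (hz p) hC
    exact ⟨L, hL⟩
  choose Lc hLc using hex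
  refine ⟨fun p => SignAux.W r z (Lc p), fun p => SignAux.W_pm r z hr1 (hLc p), ?_⟩
  intro u v hcov
  have hsat : SignAux.SatL z v (Lc u ++ [v]) := by
    obtain ⟨hch, hhd, hlast⟩ := hLc u
    refine ⟨?_, ?_, List.getLast?_concat⟩
    · unfold List.Chain'
      rw [List.isChain_append]
      refine ⟨hch, List.isChain_singleton v, fun x hx y hy => ?_⟩
      rw [hlast] at hx
      rw [Option.mem_some_iff] at hx
      simp only [List.head?_cons, Option.mem_some_iff] at hy
      rw [← hx, ← hy]
      exact hcov
    · rw [List.head?_append, hhd]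
      rfl
  have hWv : SignAux.W r z (Lc v) = SignAux.W r z (Lc u) * r u v := by
    have hinv := SignAux.W_inv r z hg hr2 (hz v) (hshell z v (hz v)) (hLc v) hsat
    rw [hinv]
    exact SignAux.W_append r z (hLc u)
  have hruv : r u v = s' u v * s u v := rfl
  rcases SignAux.W_pm r z hr1 (hLc u) with h1 | h1 <;>
    rcases hs.1 u v hcov with h2 | h2 <;>
    · show s' u v = SignAux.W r z (Lc u) * SignAux.W r z (Lc v) * s u v
      rw [hWv, hruv, h1, h2]
      ring
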